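/- Let R be a Dedekind domain of prime characteristic p > 0. Then R is F-pure regular: for every nonzero c ∈ R there exists an integer e ≥ 1 such that the R-linear map λ^e_c : R → F^e_*R sending 1 to c is a pure map of R-modules. -/

import Mathlib

universe u v w

/-- `S` viewed as a module over itself via the `e`-th iterate of the Frobenius:
`a • x = a ^ (p ^ e) * x`.  This is the module `F^e_* S`. -/
def Frob (S : Type u) (_p _e : ℕ) : Type u := S

namespace Frob

variable {S : Type u} [CommRing S] {p e : ℕ}

instance : CommRing (Frob S p e) := inferInstanceAs (CommRing S)

/-- The identity map of `S`, viewed as a map `S → F^e_* S`. -/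
def of : S → Frob S p e := id

/-- The identity map of `S`, viewed as a map `F^e_* S → S`. -/
def toBase : Frob S p e → S := id

/-- The `e`-th iterate of the Frobenius, `x ↦ x ^ (p ^ e)`, as a ring homomorphism
`S →+* F^e_* S`. -/
def frobeniusTo (S : Type u) [CommRing S] (p e : ℕ) [Fact p.Prime] [CharP S p] :
    S →+* Frob S p e := (iterateFrobenius S p e : S →+* S)

instance [Fact p.Prime] [CharP S p] : Module S (Frob S p e) :=
  Module.compHom (Frob S p e) (frobeniusTo S p e)

@[simp] lemma smul_def [Fact p.Prime] [CharP S p] (a : S) (x : Frob S p e) :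
    a • x = of (a ^ p ^ e * toBase x) := rfl

end Frob

/-- A map of `R`-modules is pure if tensoring with any `R`-module preserves injectivity. -/
def IsPure {R : Type u} [CommRing R] {M : Type v} {N : Type w} [AddCommGroup M] [Module R M]
    [AddCommGroup N] [Module R N] (f : M →ₗ[R] N) : Prop :=
  ∀ (P : Type u) [AddCommGroup P] [Module R P], Function.Injective (LinearMap.lTensor P f)

/-- The `S`-linear map `λ^e_c : S → F^e_* S` sending `1` to `c`; as a map of sets it is
`x ↦ x ^ (p ^ e) * c`. -/
def lambdaMap (S : Type u) [CommRing S] (p : ℕ) [Fact p.Prime] [CharP S p] (e : ℕ) (c : S) :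
    S →ₗ[S] Frob S p e where
  toFun x := Frob.of (x ^ p ^ e * c)
  map_add' x y := by
    show Frob.of ((x + y) ^ p ^ e * c) = Frob.of (x ^ p ^ e * c + y ^ p ^ e * c)
    rw [add_pow_char_pow, add_mul]
  map_smul' a x := by
    show Frob.of ((a * x) ^ p ^ e * c) = a • Frob.of (x ^ p ^ e * c)
    rw [Frob.smul_def]
    show Frob.of ((a * x) ^ p ^ e * c) = Frob.of (a ^ p ^ e * (x ^ p ^ e * c))
    rw [mul_pow, mul_assoc]

section AuxLemmas

open UniqueFactorizationMonoid in
/-- Key arithmetic lemma in a Dedekind domain: if `q` is larger than the number of prime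
factors (with multiplicity) of the ideal `(c)`, then any relation `a ^ q * x = b ^ q * c`
with `a ≠ 0` forces `x ∈ {d ^ q * c}`. -/
lemma aux_key_dvd {R : Type u} [CommRing R] [IsDedekindDomain R] {c : R} (hc : c ≠ 0) :
    ∃ N : ℕ, ∀ q : ℕ, N < q → ∀ a b x : R, a ≠ 0 → a ^ q * x = b ^ q * c →
      ∃ d : R, x = d ^ q * c := by
  classical
  refine ⟨Multiset.card (normalizedFactors (Ideal.span {c} : Ideal R)), ?_⟩
  intro q hq a b x ha heq
  have hq0 : q ≠ 0 := by omega
  rcases eq_or_ne x 0 with rfl | hx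
  · exact ⟨0, by rw [zero_pow hq0, zero_mul]⟩
  have hb : b ≠ 0 := by
    rintro rfl
    rw [zero_pow hq0, zero_mul] at heq
    rcases mul_eq_zero.mp heq with h | h
    · exact pow_ne_zero q ha h
    · exact hx h
  have hAx : (Ideal.span {a} : Ideal R) ≠ 0 := fun h =>
    ha (by rwa [Ideal.zero_eq_bot, Ideal.span_singleton_eq_bot] at h)
  have hBx : (Ideal.span {b} : Ideal R) ≠ 0 := fun h =>
    hb (by rwa [Ideal.zero_eq_bot, Ideal.span_singleton_eq_bot] at h)
  have hCx : (Ideal.span {c} : Ideal R) ≠ 0 := fun h =>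
    hc (by rwa [Ideal.zero_eq_bot, Ideal.span_singleton_eq_bot] at h)
  have hXx : (Ideal.span {x} : Ideal R) ≠ 0 := fun h =>
    hx (by rwa [Ideal.zero_eq_bot, Ideal.span_singleton_eq_bot] at h)
  have hspan : (Ideal.span {a} : Ideal R) ^ q * Ideal.span {x}
      = Ideal.span {b} ^ q * Ideal.span {c} := by
    rw [Ideal.span_singleton_pow, Ideal.span_singleton_pow,
      Ideal.span_singleton_mul_span_singleton, Ideal.span_singleton_mul_span_singleton, heq]
  have hcnt : ∀ P : Ideal R,
      q * (normalizedFactors (Ideal.span {a} : Ideal R)).count P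
        + (normalizedFactors (Ideal.span {x} : Ideal R)).count P
      = q * (normalizedFactors (Ideal.span {b} : Ideal R)).count P
        + (normalizedFactors (Ideal.span {c} : Ideal R)).count P := by
    intro P
    have h1 := congrArg (fun I => Multiset.count P (normalizedFactors I)) hspan
    rw [normalizedFactors_mul (pow_ne_zero q hAx) hXx,
      normalizedFactors_mul (pow_ne_zero q hBx) hCx,
      normalizedFactors_pow, normalizedFactors_pow,
      Multiset.count_add, Multiset.count_add,
      Multiset.count_nsmul, Multiset.count_nsmul] at h1
    exact h1
  have hle : normalizedFactors (Ideal.span {c} : Ideal R)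
      ≤ normalizedFactors (Ideal.span {x} : Ideal R) := by
    rw [Multiset.le_iff_count]
    intro P
    have h1 := hcnt P
    set i := (normalizedFactors (Ideal.span {c} : Ideal R)).count P with hi
    set j := (normalizedFactors (Ideal.span {x} : Ideal R)).count P with hj
    have hiq : i < q := lt_of_le_of_lt (Multiset.count_le_card P _) hq
    by_contra hcon
    push_neg at hcon
    have hjq : j < q := lt_trans hcon hiq
    have hmod : j % q = i % q := by
      have := congrArg (· % q) h1
      simpa [Nat.mul_add_mod] using this
    rw [Nat.mod_eq_of_lt hjq, Nat.mod_eq_of_lt hiq] at hmod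
    omega
  have hdvd : (Ideal.span {c} : Ideal R) ∣ Ideal.span {x} :=
    (dvd_iff_normalizedFactors_le_normalizedFactors hCx hXx).mpr hle
  have hcx : c ∣ x := Ideal.span_singleton_le_span_singleton.mp (Ideal.dvd_iff_le.mp hdvd)
  obtain ⟨t, rfl⟩ := hcx
  have heq2 : a ^ q * t = b ^ q := mul_left_cancel₀ hc (by linear_combination heq)
  have ht : t ≠ 0 := by
    rintro rfl
    rw [mul_zero] at heq2
    exact pow_ne_zero q hb heq2.symm
  have hTx : (Ideal.span {t} : Ideal R) ≠ 0 := fun h =>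
    ht (by rwa [Ideal.zero_eq_bot, Ideal.span_singleton_eq_bot] at h)
  have hspan2 : (Ideal.span {a} : Ideal R) ^ q * Ideal.span {t} = Ideal.span {b} ^ q := by
    rw [Ideal.span_singleton_pow, Ideal.span_singleton_pow,
      Ideal.span_singleton_mul_span_singleton, heq2]
  have hab : (Ideal.span {a} : Ideal R) ∣ Ideal.span {b} := by
    rw [dvd_iff_normalizedFactors_le_normalizedFactors hAx hBx, Multiset.le_iff_count]
    intro P
    have h1 := congrArg (fun I => Multiset.count P (normalizedFactors I)) hspan2
    rw [normalizedFactors_mul (pow_ne_zero q hAx) hTx,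
      normalizedFactors_pow, normalizedFactors_pow,
      Multiset.count_add, Multiset.count_nsmul, Multiset.count_nsmul] at h1
    exact Nat.le_of_mul_le_mul_left (le_of_le_of_eq (Nat.le_add_right _ _) h1)
      (Nat.pos_of_ne_zero hq0)
  have hab' : a ∣ b := Ideal.span_singleton_le_span_singleton.mp (Ideal.dvd_iff_le.mp hab)
  obtain ⟨d, rfl⟩ := hab'
  refine ⟨d, ?_⟩
  have h2 : a ^ q * t = a ^ q * d ^ q := by rw [heq2, mul_pow]
  have ht2 := mul_left_cancel₀ (pow_ne_zero q ha) h2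
  rw [ht2]; ring

lemma aux_list_sum_apply {R : Type*} [Semiring R] {M N : Type*} [AddCommMonoid M]
    [AddCommMonoid N] [Module R M] [Module R N] (l : List (M →ₗ[R] N)) (x : M) :
    l.sum x = (l.map fun f => f x).sum := by
  induction l with
  | nil => simp
  | cons f l ih => simp [List.sum_cons, LinearMap.add_apply, ih]

lemma aux_lTensor_list_sum (R : Type*) [CommRing R] (M : Type*) {N P : Type*}
    [AddCommGroup M] [AddCommGroup N] [AddCommGroup P]
    [Module R M] [Module R N] [Module R P] (l : List (N →ₗ[R] P)) :
    LinearMap.lTensor M l.sum = (l.map fun f => LinearMap.lTensor M f).sum := by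
  induction l with
  | nil => simp [LinearMap.lTensor_zero]
  | cons f l ih => simp [LinearMap.lTensor_add, ih]

open TensorProduct in
/-- Over a Dedekind domain, a torsion-free module is flat. -/
lemma aux_flat_of_torsionFree {R : Type u} [CommRing R] [IsDedekindDomain R]
    {M : Type v} [AddCommGroup M] [Module R M]
    (htf : ∀ (a : R) (m : M), a • m = 0 → a = 0 ∨ m = 0) : Module.Flat R M := by
  classical
  rw [Module.Flat.iff_lTensor_injective']
  intro I
  rcases eq_or_ne I ⊥ with rfl | hI
  · have hz : ∀ u : M ⊗[R] (⊥ : Ideal R), u = 0 := by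
      intro u
      induction u using TensorProduct.induction_on with
      | zero => rfl
      | tmul m s =>
        have hs : s = 0 := Subtype.ext ((Submodule.mem_bot R).mp s.2)
        rw [hs, tmul_zero]
      | add x y hx hy => rw [hx, hy, add_zero]
    intro u v _
    rw [hz u, hz v]
  · obtain ⟨a, haI, ha⟩ := Submodule.exists_mem_ne_zero_of_ne_bot hI
    obtain ⟨J, hIJ⟩ : I ∣ Ideal.span {a} :=
      Ideal.dvd_iff_le.mpr ((Ideal.span_singleton_le_iff_mem I).mpr haI)
    have hmem : a ∈ I * J := by rw [← hIJ]; exact Ideal.mem_span_singleton_self a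
    obtain ⟨l, hl⟩ : ∃ l : List (I × J), (l.map fun p => (p.1 : R) * (p.2 : R)).sum = a := by
      refine Submodule.mul_induction_on hmem ?_ ?_
      · intro m hm n hn
        exact ⟨[(⟨m, hm⟩, ⟨n, hn⟩)], by simp⟩
      · rintro z w ⟨l₁, h₁⟩ ⟨l₂, h₂⟩
        exact ⟨l₁ ++ l₂, by rw [List.map_append, List.sum_append, h₁, h₂]⟩
    have hdvd : ∀ (y : J) (s : I), (a : R) ∣ (y : R) * (s : R) := by
      intro y s
      rw [← Ideal.mem_span_singleton, hIJ, mul_comm (y : R) (s : R)]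
      exact Ideal.mul_mem_mul s.2 y.2
    let τ : J → (I →ₗ[R] R) := fun y =>
      { toFun := fun s => (hdvd y s).choose
        map_add' := by
          intro s t
          apply mul_left_cancel₀ ha
          have e1 := (hdvd y (s + t)).choose_spec
          have e2 := (hdvd y s).choose_spec
          have e3 := (hdvd y t).choose_spec
          have e4 : ((s + t : I) : R) = (s : R) + (t : R) := rfl
          rw [mul_add]
          linear_combination e2 + e3 - e1 + (y : R) * e4
        map_smul' := by
          intro r s
          simp only [RingHom.id_apply, smul_eq_mul]
          apply mul_left_cancel₀ ha
          have e1 := (hdvd y (r • s)).choose_spec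
          have e2 := (hdvd y s).choose_spec
          have e3 : ((r • s : I) : R) = r * (s : R) := rfl
          linear_combination r * e2 - e1 + (y : R) * e3 }
    have hτ : ∀ (y : J) (s : I), a * τ y s = (y : R) * (s : R) := fun y s =>
      ((hdvd y s).choose_spec).symm
    have htfR : ∀ (r : R) (w : M ⊗[R] R), r • w = 0 → r = 0 ∨ w = 0 := by
      intro r w hw
      rcases eq_or_ne r 0 with rfl | hr
      · exact Or.inl rfl
      right
      have h2 : r • (TensorProduct.rid R M w) = 0 := by
        rw [← map_smul, hw, map_zero]
      rcases htf r _ h2 with h | h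
      · exact absurd h hr
      · exact (LinearEquiv.map_eq_zero_iff _).mp h
    rw [injective_iff_map_eq_zero]
    intro u hu
    have hcomp : ∀ y : J, LinearMap.lTensor M (τ y) u = 0 := by
      intro y
      have hfeq : a • τ y = (LinearMap.lsmul R R (y : R)) ∘ₗ I.subtype := by
        apply LinearMap.ext
        intro s
        show a • τ y s = (y : R) • (s : R)
        rw [smul_eq_mul, smul_eq_mul, hτ]
      have h1 : a • LinearMap.lTensor M (τ y) u = 0 := by
        have h2 : a • LinearMap.lTensor M (τ y) u = LinearMap.lTensor M (a • τ y) u := by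
          rw [LinearMap.lTensor_smul, LinearMap.smul_apply]
        rw [h2, hfeq, LinearMap.lTensor_comp, LinearMap.comp_apply, hu, map_zero]
      rcases htfR a _ h1 with h | h
      · exact absurd h ha
      · exact h
    have hkey : ∀ s : I, (l.map fun p => τ p.2 s * (p.1 : R)).sum = (s : R) := by
      intro s
      apply mul_left_cancel₀ ha
      have hmain : ∀ l' : List (I × J),
          a * (l'.map fun p => τ p.2 s * (p.1 : R)).sum
            = (s : R) * (l'.map fun p => (p.1 : R) * (p.2 : R)).sum := by
        intro l'
        induction l' with
        | nil => simp
        | cons p l'' ih =>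
          simp only [List.map_cons, List.sum_cons, mul_add]
          rw [ih]
          linear_combination (p.1 : R) * hτ p.2 s
      rw [hmain l, hl, mul_comm]
    have hid : (l.map fun p => (LinearMap.toSpanSingleton R I p.1) ∘ₗ τ p.2).sum
        = (LinearMap.id : I →ₗ[R] I) := by
      apply LinearMap.ext
      intro s
      apply Subtype.ext
      rw [aux_list_sum_apply, List.map_map]
      rw [AddSubmonoidClass.coe_list_sum]
      simp only [List.map_map, Function.comp_def, LinearMap.coe_comp,
        LinearMap.toSpanSingleton_apply, SetLike.val_smul, smul_eq_mul, Function.comp_apply,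
        LinearMap.id_coe, id_eq]
      exact hkey s
    have hu0 : LinearMap.lTensor M
        ((l.map fun p => (LinearMap.toSpanSingleton R I p.1) ∘ₗ τ p.2).sum) u = 0 := by
      rw [aux_lTensor_list_sum, aux_list_sum_apply]
      apply List.sum_eq_zero
      intro z hz
      simp only [List.map_map, List.mem_map, Function.comp_apply] at hz
      obtain ⟨p, hp, rfl⟩ := hz
      show LinearMap.lTensor M ((LinearMap.toSpanSingleton R I p.1) ∘ₗ τ p.2) u = 0
      rw [LinearMap.lTensor_comp, LinearMap.comp_apply, hcomp p.2, map_zero]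
    rw [hid] at hu0
    rwa [LinearMap.lTensor_id, LinearMap.id_apply] at hu0

open TensorProduct in
/-- An injective linear map with flat cokernel is pure. -/
lemma aux_isPure_of_flat_coker {R : Type u} [CommRing R] {M : Type v} {N : Type w}
    [AddCommGroup M] [Module R M] [AddCommGroup N] [Module R N]
    (f : M →ₗ[R] N) (hflat : Module.Flat R (N ⧸ LinearMap.range f))
    (hf : Function.Injective f) : IsPure f := by
  intro P _ _
  rw [injective_iff_map_eq_zero]
  intro u' hu'
  have hfg : Function.Exact f (LinearMap.range f).mkQ := LinearMap.exact_map_mkQ_range f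
  have hg : Function.Surjective (LinearMap.range f).mkQ := Submodule.mkQ_surjective _
  set π : (P →₀ R) →ₗ[R] P := Finsupp.linearCombination R id with hπ_def
  have hπ : Function.Surjective π := Finsupp.linearCombination_id_surjective R P
  have hιπ : Function.Exact (LinearMap.ker π).subtype π := LinearMap.exact_subtype_ker_map π
  obtain ⟨u, rfl⟩ := LinearMap.rTensor_surjective M hπ u'
  have h1 : LinearMap.rTensor N π (LinearMap.lTensor (P →₀ R) f u) = 0 := by
    have e1 := LinearMap.congr_fun (LinearMap.rTensor_comp_lTensor (f := π) (g := f)) u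
    have e2 := LinearMap.congr_fun (LinearMap.lTensor_comp_rTensor (f := π) (g := f)) u
    rw [LinearMap.comp_apply] at e1 e2
    rw [e1, ← e2]
    exact hu'
  obtain ⟨w, hw⟩ := (rTensor_exact (M := ↥(LinearMap.ker π)) (f := (LinearMap.ker π).subtype) (g := π) (Q := N) hιπ hπ (LinearMap.lTensor (P →₀ R) f u)).mp h1
  have h3 : LinearMap.lTensor (LinearMap.ker π) (LinearMap.range f).mkQ w = 0 := by
    have hinj : Function.Injective
        (LinearMap.rTensor (N ⧸ LinearMap.range f) (LinearMap.ker π).subtype) :=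
      Module.Flat.rTensor_preserves_injective_linearMap _ (Submodule.injective_subtype _)
    apply hinj
    rw [map_zero]
    have e1 := LinearMap.congr_fun
      (LinearMap.rTensor_comp_lTensor (f := (LinearMap.ker π).subtype) (g := (LinearMap.range f).mkQ)) w
    have e2 := LinearMap.congr_fun
      (LinearMap.lTensor_comp_rTensor (f := (LinearMap.ker π).subtype) (g := (LinearMap.range f).mkQ)) w
    rw [LinearMap.comp_apply] at e1 e2
    rw [e1, ← e2, hw, ← LinearMap.lTensor_comp_apply, hfg.linearMap_comp_eq_zero]
    simp
  obtain ⟨t, ht⟩ := (lTensor_exact (f := f) (g := (LinearMap.range f).mkQ) (Q := ↥(LinearMap.ker π)) hfg hg w).mp h3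
  have h5 : LinearMap.lTensor (P →₀ R) f (LinearMap.rTensor M (LinearMap.ker π).subtype t)
      = LinearMap.lTensor (P →₀ R) f u := by
    have e1 := LinearMap.congr_fun
      (LinearMap.lTensor_comp_rTensor (f := (LinearMap.ker π).subtype) (g := f)) t
    have e2 := LinearMap.congr_fun
      (LinearMap.rTensor_comp_lTensor (f := (LinearMap.ker π).subtype) (g := f)) t
    rw [LinearMap.comp_apply] at e1 e2
    rw [e1, ← e2, ht, hw]
  have h6 : LinearMap.rTensor M (LinearMap.ker π).subtype t = u :=
    Module.Flat.lTensor_preserves_injective_linearMap f hf h5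
  rw [← h6, ← LinearMap.rTensor_comp_apply, hιπ.linearMap_comp_eq_zero]
  simp

end AuxLemmas

/-- **Dedekind domains of prime characteristic are F-pure regular.**
Let `R` be a Dedekind domain of prime characteristic `p`.  Then for every nonzero `c ∈ R`
there exists `e ≥ 1` such that the `R`-linear map `λ^e_c : R → F^e_* R`, sending `1` to `c`,
is a pure map of `R`-modules. -/
theorem dedekind_domain_is_fpure_regular
    (p : ℕ) [Fact p.Prime]
    (R : Type u) [CommRing R] [IsDedekindDomain R] [CharP R p] :
    ∀ c : R, c ≠ 0 → ∃ e : ℕ, 1 ≤ e ∧ IsPure (lambdaMap R p e c) := by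
  intro c hc
  obtain ⟨Nb, hNb⟩ := aux_key_dvd (R := R) hc
  have hp1 : 1 < p := (Fact.out : p.Prime).one_lt
  refine ⟨Nb + 1, Nat.le_add_left 1 Nb, ?_⟩
  set e := Nb + 1 with he
  have hq : Nb < p ^ e := lt_trans (Nat.lt_succ_self Nb) (Nat.lt_pow_self hp1)
  have hq0 : p ^ e ≠ 0 := (Nat.pow_pos (n := e) (by omega)).ne'
  have hinj : Function.Injective (lambdaMap R p e c) := by
    intro x y hxy
    have hxy' : x ^ p ^ e * c = y ^ p ^ e * c := hxy
    have hxq : x ^ p ^ e = y ^ p ^ e := mul_right_cancel₀ hc hxy'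
    have h7 : (x - y) ^ p ^ e = 0 := by
      rw [sub_pow_char_pow, hxq, sub_self]
    have h8 : x - y = 0 := (pow_eq_zero_iff hq0).mp h7
    exact sub_eq_zero.mp h8
  have htf : ∀ (a : R) (z : Frob R p e ⧸ LinearMap.range (lambdaMap R p e c)),
      a • z = 0 → a = 0 ∨ z = 0 := by
    intro a z hz
    rcases eq_or_ne a 0 with rfl | ha
    · exact Or.inl rfl
    right
    obtain ⟨x, rfl⟩ := Submodule.mkQ_surjective _ z
    rw [Submodule.mkQ_apply] at hz ⊢
    rw [← Submodule.Quotient.mk_smul] at hz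
    have hmem := (Submodule.Quotient.mk_eq_zero _).mp hz
    obtain ⟨b, hb⟩ := hmem
    have hb' : a ^ p ^ e * Frob.toBase x = b ^ p ^ e * c := hb.symm
    obtain ⟨d, hd⟩ := hNb (p ^ e) hq a b (Frob.toBase x) ha hb'
    refine (Submodule.Quotient.mk_eq_zero _).mpr ⟨d, ?_⟩
    exact hd.symm
  have hflat := aux_flat_of_torsionFree htf
  exact aux_isPure_of_flat_coker (lambdaMap R p e c) hflat hinj
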